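/- Let d_S = 2, with ρ_S the density matrix with entries ρ_{11} = p, ρ_{22} = 1 − p, ρ_{12} = c, ρ_{21} = c* in the eigenbasis of H_S, and let X, Y, Z be as determined by the utility u with u(0) = 0. Then for q = 1/2 the optimal expected utility equals 𝓤(ρ_S) = (X − pY)/2 + √(((X − pY)/2)² + |c|² Z²); equivalently, the maximum over all pairs (α, β) ∈ ℂ² with |α|² + |β|² = 1 of |β|²(X − pY) − 2 Re(c α β) Z equals this value. -/

import Mathlib

open Matrix BigOperators Finset Kronecker
open scoped ComplexOrder

noncomputable section

namespace Daemonic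

/-- The outer product `|x⟩⟨y|` as a matrix. -/
def ketbra {ι : Type*} [Fintype ι] (x y : ι → ℂ) : Matrix ι ι ℂ :=
  Matrix.vecMulVec x (star y)

/-- A family of vectors is orthonormal. -/
def ONFam {ι κ : Type*} [Fintype ι] [DecidableEq κ] (v : κ → ι → ℂ) : Prop :=
  ∀ i j, star (v i) ⬝ᵥ v j = if i = j then 1 else 0

/-- A density matrix: positive semidefinite with unit trace. -/
def IsDensity {ι : Type*} [Fintype ι] (ρ : Matrix ι ι ℂ) : Prop :=
  ρ.PosSemidef ∧ ρ.trace = 1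

/-- The matrix element `⟨x|M|y⟩`. -/
def matElem {ι : Type*} [Fintype ι] (M : Matrix ι ι ℂ) (x y : ι → ℂ) : ℂ :=
  star x ⬝ᵥ (M *ᵥ y)

/-- The Hamiltonian `H_S = ∑ₖ εₖ |εₖ⟩⟨εₖ|`. -/
def ham {n : ℕ} (ε : Fin n → ℝ) (v : Fin n → Fin n → ℂ) : Matrix (Fin n) (Fin n) ℂ :=
  ∑ k, (ε k : ℂ) • ketbra (v k) (v k)

/-- `e^{t H_S} = ∑ₖ e^{t εₖ} |εₖ⟩⟨εₖ|` (functional calculus in the eigenbasis of `H_S`). -/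
def expHam {n : ℕ} (ε : Fin n → ℝ) (v : Fin n → Fin n → ℂ) (t : ℝ) :
    Matrix (Fin n) (Fin n) ℂ :=
  ∑ k, (Real.exp (t * ε k) : ℂ) • ketbra (v k) (v k)

/-- The expected utility `⟨u(w)⟩_{ρ,U}` for quasiprobability parameter `q`,
with respect to the eigenvalues `ε` and orthonormal eigenvectors `v` of `H_S`. -/
def expUtil {n : ℕ} (u : ℝ → ℝ) (q : ℝ) (ε : Fin n → ℝ) (v : Fin n → Fin n → ℂ)
    (ρ U : Matrix (Fin n) (Fin n) ℂ) : ℝ :=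
  ∑ i, ∑ j, ∑ k,
    (matElem ρ (v i) (v j) * matElem Uᴴ (v j) (v k) * matElem U (v k) (v i)).re *
      u (q * ε i + (1 - q) * ε j - ε k)

/-- The optimal expected utility `𝓤(ρ) = max over unitaries U of ⟨u(w)⟩_{ρ,U}`. -/
def optUtil {n : ℕ} (u : ℝ → ℝ) (q : ℝ) (ε : Fin n → ℝ) (v : Fin n → Fin n → ℂ)
    (ρ : Matrix (Fin n) (Fin n) ℂ) : ℝ :=
  ⨆ U : Matrix.unitaryGroup (Fin n) ℂ, expUtil u q ε v ρ (U : Matrix (Fin n) (Fin n) ℂ)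

/-- The exponential utility `u(w) = (1 - e^{-r w})/r`. -/
def expUtility (r : ℝ) : ℝ → ℝ := fun w => (1 - Real.exp (-r * w)) / r

/-- The partial trace over the ancilla. -/
def ptraceA {dS dA : ℕ} (ρSA : Matrix (Fin dS × Fin dA) (Fin dS × Fin dA) ℂ) :
    Matrix (Fin dS) (Fin dS) ℂ :=
  Matrix.of fun i j => ∑ a, ρSA (i, a) (j, a)

/-- The unnormalized conditional state `Tr_A((I ⊗ Π_a) ρ_SA (I ⊗ Π_a))`, where
`Π_a = |a⟩⟨a|` projects onto the vector `w a` of an orthonormal basis `w` of the ancilla. -/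
def condUnnorm {dS dA : ℕ} (w : Fin dA → Fin dA → ℂ)
    (ρSA : Matrix (Fin dS × Fin dA) (Fin dS × Fin dA) ℂ) (a : Fin dA) :
    Matrix (Fin dS) (Fin dS) ℂ :=
  Matrix.of fun i j => ∑ c, ∑ d, ρSA (i, c) (j, d) * (w a d * star (w a c))

/-- The outcome probability `p_a = Tr((I ⊗ Π_a) ρ_SA)`. -/
def prob {dS dA : ℕ} (w : Fin dA → Fin dA → ℂ)
    (ρSA : Matrix (Fin dS × Fin dA) (Fin dS × Fin dA) ℂ) (a : Fin dA) : ℝ :=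
  ((condUnnorm w ρSA a).trace).re

/-- The conditional state `ρ_{S|a}`. -/
def condState {dS dA : ℕ} (w : Fin dA → Fin dA → ℂ)
    (ρSA : Matrix (Fin dS × Fin dA) (Fin dS × Fin dA) ℂ) (a : Fin dA) :
    Matrix (Fin dS) (Fin dS) ℂ :=
  ((prob w ρSA a : ℂ))⁻¹ • condUnnorm w ρSA a

/-- The daemonic expected utility `𝓤_{{Π_a}}(ρ_SA) = ∑_a p_a 𝓤(ρ_{S|a})`. -/
def daemonicUtil {dS dA : ℕ} (u : ℝ → ℝ) (q : ℝ) (ε : Fin dS → ℝ)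
    (v : Fin dS → Fin dS → ℂ) (w : Fin dA → Fin dA → ℂ)
    (ρSA : Matrix (Fin dS × Fin dA) (Fin dS × Fin dA) ℂ) : ℝ :=
  ∑ a, prob w ρSA a * optUtil u q ε v (condState w ρSA a)

/-- The maximum daemonic gain `δ𝓤(ρ_SA)`, maximizing over all orthonormal bases of the
ancilla (equivalently, over the rows of all unitary matrices). -/
def daemonicGain {dS dA : ℕ} (u : ℝ → ℝ) (q : ℝ) (ε : Fin dS → ℝ)
    (v : Fin dS → Fin dS → ℂ)
    (ρSA : Matrix (Fin dS × Fin dA) (Fin dS × Fin dA) ℂ) : ℝ :=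
  (⨆ V : Matrix.unitaryGroup (Fin dA) ℂ,
      daemonicUtil u q ε v (fun a => (V : Matrix (Fin dA) (Fin dA) ℂ) a) ρSA) -
    optUtil u q ε v (ptraceA ρSA)

/-- The ergotropy of a (possibly unnormalized) state `σ` with respect to a Hamiltonian `H`:
`ℰ_H(σ) = max over unitaries U of (Tr(Hσ) - Tr(H U σ U†))`. -/
def ergotropyH {n : ℕ} (H σ : Matrix (Fin n) (Fin n) ℂ) : ℝ :=
  ⨆ U : Matrix.unitaryGroup (Fin n) ℂ,
    ((H * σ).trace -
      (H * ((U : Matrix (Fin n) (Fin n) ℂ) * σ * (U : Matrix (Fin n) (Fin n) ℂ)ᴴ)).trace).re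

/-- A separable bipartite state: a convex combination of product states. -/
def IsSeparable {dS dA : ℕ} (ρSA : Matrix (Fin dS × Fin dA) (Fin dS × Fin dA) ℂ) : Prop :=
  ∃ (m : ℕ) (p : Fin m → ℝ) (σ : Fin m → Matrix (Fin dS) (Fin dS) ℂ)
    (τ : Fin m → Matrix (Fin dA) (Fin dA) ℂ),
    (∀ k, 0 ≤ p k) ∧ (∑ k, p k = 1) ∧ (∀ k, IsDensity (σ k)) ∧ (∀ k, IsDensity (τ k)) ∧
    ρSA = ∑ k, (p k : ℂ) • (σ k ⊗ₖ τ k)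

/-- A classical-quantum state `ρ_SA = ∑ₖ pₖ Pₖ ⊗ ρᴬₖ` with `Pₖ` mutually orthogonal
rank-one projectors summing to the identity. -/
def IsClassicalQuantum {dS dA : ℕ}
    (ρSA : Matrix (Fin dS × Fin dA) (Fin dS × Fin dA) ℂ) : Prop :=
  ∃ (p : Fin dS → ℝ) (ψ : Fin dS → Fin dS → ℂ) (τ : Fin dS → Matrix (Fin dA) (Fin dA) ℂ),
    (∀ k, 0 ≤ p k) ∧ (∑ k, p k = 1) ∧ ONFam ψ ∧ (∀ k, IsDensity (τ k)) ∧
    ρSA = ∑ k, (p k : ℂ) • (ketbra (ψ k) (ψ k) ⊗ₖ τ k)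

/-- The dephasing map associated with an orthonormal basis `v`. -/
def dephase {n : ℕ} (v : Fin n → Fin n → ℂ) (ρ : Matrix (Fin n) (Fin n) ℂ) :
    Matrix (Fin n) (Fin n) ℂ :=
  ∑ k, ketbra (v k) (v k) * ρ * ketbra (v k) (v k)

section Aux
variable {u : ℝ → ℝ} {ε : Fin 2 → ℝ}

lemma matElem_ketbra (a b x y : Fin 2 → ℂ) :
    matElem (ketbra a b) x y = (star x ⬝ᵥ a) * (star b ⬝ᵥ y) := by
  simp [matElem, ketbra, Matrix.mulVec, Matrix.vecMulVec, dotProduct,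
    Fin.sum_univ_two]
  ring

lemma matElem_add (M N : Matrix (Fin 2) (Fin 2) ℂ) (x y : Fin 2 → ℂ) :
    matElem (M + N) x y = matElem M x y + matElem N x y := by
  simp [matElem, Matrix.add_mulVec, dotProduct_add]
  ring

lemma matElem_smul (a : ℂ) (M : Matrix (Fin 2) (Fin 2) ℂ) (x y : Fin 2 → ℂ) :
    matElem (a • M) x y = a * matElem M x y := by
  simp [matElem, Matrix.smul_mulVec, dotProduct_smul, smul_eq_mul]
  ring

lemma matElem_smulR (a : ℝ) (M : Matrix (Fin 2) (Fin 2) ℂ) (x y : Fin 2 → ℂ) :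
    matElem (a • M) x y = (a : ℂ) * matElem M x y := by
  rw [show (a • M) = (a:ℂ) • M from by ext i j; simp [Complex.real_smul]]
  exact matElem_smul _ M x y

lemma matElem_conjT (M : Matrix (Fin 2) (Fin 2) ℂ) (x y : Fin 2 → ℂ) :
    matElem Mᴴ x y = starRingEnd ℂ (matElem M y x) := by
  simp [matElem, Matrix.mulVec, dotProduct, Fin.sum_univ_two,
    Matrix.conjTranspose_apply, map_add, _root_.map_mul, Complex.star_def]
  ring

/-- change of basis matrix -/
def Vm (v : Fin 2 → Fin 2 → ℂ) : Matrix (Fin 2) (Fin 2) ℂ := Matrix.of fun l k => v k l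

lemma Vm_mem {v : Fin 2 → Fin 2 → ℂ} (hv : ONFam v) :
    Vm v ∈ Matrix.unitaryGroup (Fin 2) ℂ := by
  rw [Matrix.mem_unitaryGroup_iff']
  ext i j
  have h := hv i j
  simp [dotProduct, Fin.sum_univ_two] at h
  simp [Matrix.mul_apply, Matrix.star_apply, Vm, Fin.sum_univ_two, Matrix.one_apply,
    Complex.star_def] at h ⊢
  exact h

lemma matElem_via (v : Fin 2 → Fin 2 → ℂ) (U : Matrix (Fin 2) (Fin 2) ℂ) (k i : Fin 2) :
    matElem U (v k) (v i) = ((Vm v)ᴴ * U * (Vm v)) k i := by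
  simp [matElem, Matrix.mul_apply, Matrix.mulVec, dotProduct, Vm,
    Fin.sum_univ_two, Matrix.conjTranspose_apply, Complex.star_def]
  ring


lemma ketE {v : Fin 2 → Fin 2 → ℂ} (hv : ONFam v) (i j k l : Fin 2) :
    matElem (ketbra (v i) (v j)) (v k) (v l) =
      (if k = i then 1 else 0) * (if j = l then 1 else 0) := by
  rw [matElem_ketbra, hv k i, hv j l]

lemma formula (u : ℝ → ℝ) (hu0 : u 0 = 0) (ε : Fin 2 → ℝ) (v : Fin 2 → Fin 2 → ℂ)
    (hv : ONFam v) (p : ℝ) (c : ℂ) (ρ : Matrix (Fin 2) (Fin 2) ℂ)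
    (hρdef : ρ = (p : ℂ) • ketbra (v 0) (v 0) + c • ketbra (v 0) (v 1) +
      (starRingEnd ℂ c) • ketbra (v 1) (v 0) + ((1 - p : ℝ) : ℂ) • ketbra (v 1) (v 1))
    (U : Matrix (Fin 2) (Fin 2) ℂ) (hU : U ∈ Matrix.unitaryGroup (Fin 2) ℂ) :
    expUtil u (1/2) ε v ρ U =
      Complex.normSq (-(starRingEnd ℂ (((Vm v)ᴴ * U * Vm v) 0 1))) *
        (u (ε 1 - ε 0) - p * (u (ε 1 - ε 0) - u (-(ε 1 - ε 0)))) -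
      2 * (c * (((Vm v)ᴴ * U * Vm v) 0 0) *
        (-(starRingEnd ℂ (((Vm v)ᴴ * U * Vm v) 0 1)))).re *
        (u ((ε 1 - ε 0)/2) - u (-((ε 1 - ε 0)/2))) := by
  set A := (Vm v)ᴴ * U * Vm v with hAdef
  have hA : ∀ k i, matElem U (v k) (v i) = A k i := matElem_via v U
  have hAH : ∀ j k, matElem Uᴴ (v j) (v k) = starRingEnd ℂ (A k j) := by
    intro j k; rw [matElem_conjT, hA]
  have hρe : ∀ i j, matElem ρ (v i) (v j) = !![(p:ℂ), c; starRingEnd ℂ c, ((1-p:ℝ):ℂ)] i j := by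
    intro i j
    rw [hρdef]
    fin_cases i <;> fin_cases j <;>
      simp [matElem_add, matElem_smul, matElem_smulR, ketE hv]
  have hAmem : A ∈ Matrix.unitaryGroup (Fin 2) ℂ := by
    rw [hAdef, ← Matrix.star_eq_conjTranspose]
    exact mul_mem (mul_mem (Unitary.star_mem (Vm_mem hv)) hU) (Vm_mem hv)
  have h1 : A * star A = 1 := (Matrix.mem_unitaryGroup_iff).mp hAmem
  have h2 : star A * A = 1 := (Matrix.mem_unitaryGroup_iff').mp hAmem
  have e1 := congrArg (fun M : Matrix (Fin 2) (Fin 2) ℂ => (M 0 0).re) h1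
  have e2 := congrArg (fun M : Matrix (Fin 2) (Fin 2) ℂ => (M 0 0).re) h2
  have e3 := congrArg (fun M : Matrix (Fin 2) (Fin 2) ℂ => (M 0 1).re) h2
  have e4 := congrArg (fun M : Matrix (Fin 2) (Fin 2) ℂ => (M 0 1).im) h2
  simp only [Matrix.mul_apply, Fin.sum_univ_two, Matrix.star_apply, Matrix.one_apply,
    Complex.add_re, Complex.add_im, Complex.mul_re, Complex.mul_im, Complex.star_def,
    Complex.conj_re, Complex.conj_im] at e1 e2 e3 e4
  norm_num at e1 e2 e3 e4
  simp only [expUtil, Fin.sum_univ_two, hA, hAH, hρe]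
  norm_num
  rw [show (1:ℝ)/2 * ε 0 + 1/2 * ε 0 - ε 0 = 0 from by ring,
    show (1:ℝ)/2 * ε 1 + 1/2 * ε 1 - ε 1 = 0 from by ring,
    show (1:ℝ)/2 * ε 0 + 1/2 * ε 0 - ε 1 = ε 0 - ε 1 from by ring,
    show (1:ℝ)/2 * ε 1 + 1/2 * ε 1 - ε 0 = ε 1 - ε 0 from by ring,
    show (1:ℝ)/2 * ε 0 + 1/2 * ε 1 - ε 0 = (ε 1 - ε 0)/2 from by ring,
    show (1:ℝ)/2 * ε 0 + 1/2 * ε 1 - ε 1 = -((ε 1 - ε 0)/2) from by ring,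
    show (1:ℝ)/2 * ε 1 + 1/2 * ε 0 - ε 0 = (ε 1 - ε 0)/2 from by ring,
    show (1:ℝ)/2 * ε 1 + 1/2 * ε 0 - ε 1 = -((ε 1 - ε 0)/2) from by ring,
    hu0]
  simp only [Complex.normSq_apply]
  linear_combination p * u (ε 0 - ε 1) * e2 - p * u (ε 0 - ε 1) * e1 +
    2 * u (-((ε 1 - ε 0)/2)) * (c.re * e3 + c.im * e4)


lemma formula_norm (v : Fin 2 → Fin 2 → ℂ) (hv : ONFam v)
    (U : Matrix (Fin 2) (Fin 2) ℂ) (hU : U ∈ Matrix.unitaryGroup (Fin 2) ℂ) :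
    Complex.normSq (((Vm v)ᴴ * U * Vm v) 0 0) + Complex.normSq (((Vm v)ᴴ * U * Vm v) 0 1) = 1 := by
  set A := (Vm v)ᴴ * U * Vm v with hAdef
  have hAmem : A ∈ Matrix.unitaryGroup (Fin 2) ℂ := by
    rw [hAdef, ← Matrix.star_eq_conjTranspose]
    exact mul_mem (mul_mem (Unitary.star_mem (Vm_mem hv)) hU) (Vm_mem hv)
  have h1 : A * star A = 1 := (Matrix.mem_unitaryGroup_iff).mp hAmem
  have e1 := congrArg (fun M : Matrix (Fin 2) (Fin 2) ℂ => (M 0 0).re) h1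
  simp only [Matrix.mul_apply, Fin.sum_univ_two, Matrix.star_apply, Matrix.one_apply,
    Complex.add_re, Complex.mul_re, Complex.star_def,
    Complex.conj_re, Complex.conj_im] at e1
  norm_num at e1
  simp only [Complex.normSq_apply]
  linear_combination e1

/-- the standard qubit unitary with columns (α,β), (-β*,α*) -/
def qU (α β : ℂ) : Matrix (Fin 2) (Fin 2) ℂ := !![α, -(starRingEnd ℂ β); β, starRingEnd ℂ α]

lemma qU_mem {α β : ℂ} (h : Complex.normSq α + Complex.normSq β = 1) :
    qU α β ∈ Matrix.unitaryGroup (Fin 2) ℂ := by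
  rw [Matrix.mem_unitaryGroup_iff']
  have h' : α.re * α.re + α.im * α.im + (β.re * β.re + β.im * β.im) = 1 := by
    simpa [Complex.normSq_apply] using h
  ext i j
  fin_cases i <;> fin_cases j <;>
    simp [qU, Matrix.mul_apply, Fin.sum_univ_two, Matrix.star_apply, Matrix.one_apply,
      Complex.ext_iff, Complex.mul_re, Complex.mul_im, Complex.conj_re, Complex.conj_im] <;>
    refine ⟨?_, ?_⟩ <;> first | linear_combination h' | linear_combination -h' | ring

lemma qU_conj (v : Fin 2 → Fin 2 → ℂ) (hv : ONFam v) (α β : ℂ) :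
    (Vm v)ᴴ * (Vm v * qU α β * (Vm v)ᴴ) * Vm v = qU α β := by
  have h1 : (Vm v)ᴴ * Vm v = 1 := by
    rw [← Matrix.star_eq_conjTranspose]
    exact (Matrix.mem_unitaryGroup_iff').mp (Vm_mem hv)
  calc (Vm v)ᴴ * (Vm v * qU α β * (Vm v)ᴴ) * Vm v
      = ((Vm v)ᴴ * Vm v) * qU α β * ((Vm v)ᴴ * Vm v) := by
        simp only [Matrix.mul_assoc]
    _ = qU α β := by rw [h1]; simp


lemma opt_bound (K Z : ℝ) (c α β : ℂ) (h : Complex.normSq α + Complex.normSq β = 1) :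
    Complex.normSq β * K - 2 * (c * α * β).re * Z ≤
      K/2 + Real.sqrt ((K/2)^2 + Complex.normSq c * Z^2) := by
  set L : ℝ := ‖c‖ * |Z| with hLdef
  have hL0 : 0 ≤ L := by positivity
  have hLsq : Complex.normSq c * Z^2 = L^2 := by
    rw [hLdef, mul_pow, Complex.sq_norm, sq_abs]
  rw [hLsq]
  set R : ℝ := Real.sqrt ((K/2)^2 + L^2) with hRdef
  have hR0 : 0 ≤ R := Real.sqrt_nonneg _
  have hR2 : R^2 = (K/2)^2 + L^2 := Real.sq_sqrt (by positivity)
  set a : ℝ := ‖α‖ with hadef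
  set b : ℝ := ‖β‖ with hbdef
  have ha0 : 0 ≤ a := norm_nonneg _
  have hb0 : 0 ≤ b := norm_nonneg _
  have hab : a^2 + b^2 = 1 := by
    rw [hadef, hbdef, Complex.sq_norm, Complex.sq_norm]; exact h
  have hnb : Complex.normSq β = b^2 := (Complex.sq_norm β).symm
  have hre : -(2 * (c * α * β).re * Z) ≤ 2 * (a * b) * L := by
    have h1 : -(2 * (c * α * β).re * Z) ≤ 2 * |(c * α * β).re| * |Z| := by
      have := abs_mul ((c * α * β).re) Z
      have h2 := neg_abs_le ((c * α * β).re * Z)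
      nlinarith [abs_nonneg ((c * α * β).re * Z)]
    have h3 : |(c * α * β).re| ≤ ‖c‖ * a * b := by
      calc |(c * α * β).re| ≤ ‖c * α * β‖ := Complex.abs_re_le_norm _
        _ = ‖c‖ * a * b := by rw [norm_mul, norm_mul]
    calc -(2 * (c * α * β).re * Z) ≤ 2 * |(c * α * β).re| * |Z| := h1
      _ ≤ 2 * (‖c‖ * a * b) * |Z| := by
          have : (0:ℝ) ≤ |Z| := abs_nonneg _
          nlinarith
      _ = 2 * (a * b) * L := by rw [hLdef]; ring
  have key : b^2 * K + 2 * (a * b) * L ≤ K/2 + R := by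
    have hX : b^2*K + 2*(a*b)*L - K/2 - R = (K/2*(b^2-a^2) + 2*a*b*L) - R := by
      linear_combination (K/2) * hab
    have hexp : R^2 - (K/2*(b^2-a^2) + 2*a*b*L)^2 = (K*(a*b) - L*(b^2-a^2))^2 := by
      rw [hR2]
      linear_combination (-(((K/2)^2 + L^2) * (a^2 + b^2 + 1))) * hab
    nlinarith [sq_nonneg (K*(a*b) - L*(b^2-a^2)), hR0, hexp]
  rw [hnb]
  linarith

lemma opt_ach (K Z : ℝ) (c : ℂ) :
    ∃ α β : ℂ, Complex.normSq α + Complex.normSq β = 1 ∧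
      Complex.normSq β * K - 2 * (c * α * β).re * Z =
        K/2 + Real.sqrt ((K/2)^2 + Complex.normSq c * Z^2) := by
  set L : ℝ := ‖c‖ * |Z| with hLdef
  have hL0 : 0 ≤ L := by positivity
  have hLsq : Complex.normSq c * Z^2 = L^2 := by
    rw [hLdef, mul_pow, Complex.sq_norm, sq_abs]
  rw [hLsq]
  set R : ℝ := Real.sqrt ((K/2)^2 + L^2) with hRdef
  have hR0 : 0 ≤ R := Real.sqrt_nonneg _
  have hR2 : R^2 = (K/2)^2 + L^2 := Real.sq_sqrt (by positivity)
  rcases eq_or_lt_of_le hR0 with hR | hR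
  · -- R = 0 : K = 0, L = 0
    have hK : K = 0 := by nlinarith
    have hLz : L = 0 := by nlinarith
    exact ⟨1, 0, by simp, by simp [hK, ← hR]⟩
  · have hKR : |K/2| ≤ R := by
      rw [abs_le]; constructor <;> nlinarith
    have hKR1 : -R ≤ K/2 := (abs_le.mp hKR).1
    have hKR2 : K/2 ≤ R := (abs_le.mp hKR).2
    set b2 : ℝ := (R + K/2)/(2*R) with hb2
    set a2 : ℝ := (R - K/2)/(2*R) with ha2
    have hb2nn : 0 ≤ b2 := div_nonneg (by linarith) (by linarith)
    have ha2nn : 0 ≤ a2 := div_nonneg (by linarith) (by linarith)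
    set b : ℝ := Real.sqrt b2 with hbdef
    set a : ℝ := Real.sqrt a2 with hadef
    have hb2' : b^2 = b2 := Real.sq_sqrt hb2nn
    have ha2' : a^2 = a2 := Real.sq_sqrt ha2nn
    have ha0 : 0 ≤ a := Real.sqrt_nonneg _
    have hb0 : 0 ≤ b := Real.sqrt_nonneg _
    have hsum : a^2 + b^2 = 1 := by
      rw [ha2', hb2', ha2, hb2]; field_simp; ring
    have habL : a * b = L / (2*R) := by
      have h5 : a * b = Real.sqrt (a2 * b2) := by
        rw [hadef, hbdef, ← Real.sqrt_mul ha2nn]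
      have h6 : a2 * b2 = (L/(2*R))^2 := by
        rw [ha2, hb2, div_mul_div_comm, div_pow]
        congr 1
        · linear_combination hR2
        · ring
      rw [h5, h6, Real.sqrt_sq (by positivity)]
    by_cases hcz : c * (Z:ℂ) = 0
    · have hterm : 2 * (c * (a:ℂ) * (b:ℂ)).re * Z = 0 := by
        rcases mul_eq_zero.mp hcz with h | h
        · simp [h]
        · simp [show Z = 0 from by exact_mod_cast h]
      have hL : L = 0 := by
        rcases mul_eq_zero.mp hcz with h | h
        · simp [hLdef, h]
        · simp [hLdef, show Z = 0 from by exact_mod_cast h]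
      refine ⟨(a:ℂ), (b:ℂ), ?_, ?_⟩
      · simp only [Complex.normSq_ofReal]
        linear_combination hsum
      · have hcase : (R - K/2) * (R + K/2) = 0 := by linear_combination hR2 + L * hL
        simp only [Complex.normSq_ofReal]
        rcases mul_eq_zero.mp hcase with h | h
        · have hbb : b * b = 1 := by
            have h8' := hb2'
            rw [hb2] at h8'
            have : R ≠ 0 := ne_of_gt hR
            rw [show (R + K/2)/(2*R) = 1 from by field_simp; linarith] at h8'
            linear_combination h8'
          rw [hbb]
          linarith [hterm, h]
        · have hbb : b * b = 0 := by
            have h8' := hb2'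
            rw [hb2] at h8'
            have : R ≠ 0 := ne_of_gt hR
            rw [show (R + K/2)/(2*R) = 0 from by field_simp; linarith] at h8'
            linear_combination h8'
          rw [hbb]
          linarith [hterm, h]
    · have hc0 : c ≠ 0 := fun h => hcz (by simp [h])
      have hZ0 : Z ≠ 0 := fun h => hcz (by simp [h])
      have hLpos : 0 < L := by
        rw [hLdef]
        exact mul_pos (norm_pos_iff.mpr hc0) (abs_pos.mpr hZ0)
      have hLne : L ≠ 0 := ne_of_gt hLpos
      have hRne : R ≠ 0 := ne_of_gt hR
      set α : ℂ := -(a:ℂ) * (starRingEnd ℂ c) * (Z:ℂ) / (L:ℂ) with hαdef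
      have hnα : Complex.normSq α = a^2 := by
        rw [hαdef, Complex.normSq_div]
        simp only [Complex.normSq_mul, Complex.normSq_neg, Complex.normSq_ofReal,
          Complex.normSq_conj]
        rw [div_eq_iff (mul_ne_zero hLne hLne)]
        linear_combination (a*a) * hLsq
      refine ⟨α, (b:ℂ), ?_, ?_⟩
      · rw [hnα]
        simp only [Complex.normSq_ofReal]
        linear_combination hsum
      · have h6 : c * α * (b:ℂ) = ((-(a * b * Z * Complex.normSq c / L) : ℝ) : ℂ) := by
          rw [hαdef]
          rw [show c * (-(a:ℂ) * (starRingEnd ℂ c) * (Z:ℂ) / (L:ℂ)) * (b:ℂ)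
              = -((a:ℂ) * (b:ℂ) * (Z:ℂ) / (L:ℂ)) * (c * starRingEnd ℂ c) from by ring]
          rw [Complex.mul_conj]
          push_cast
          ring
        rw [h6, Complex.ofReal_re]
        simp only [Complex.normSq_ofReal]
        have h7 : (2 * a * b * (Complex.normSq c * Z^2))/L = L^2 / R := by
          rw [show 2 * a * b * (Complex.normSq c * Z^2) = (a*b) * (2 * (Complex.normSq c * Z^2)) from by ring,
            habL, hLsq]
          field_simp
        have h8 : b * b * K = (R + K/2)/(2*R) * K := by
          have h8' := hb2'
          rw [hb2] at h8'
          linear_combination K * h8'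
        have h9 : b * b * K - 2 * (-(a * b * Z * Complex.normSq c / L)) * Z
            = b * b * K + (2 * a * b * (Complex.normSq c * Z^2))/L := by ring
        rw [h9, h8, h7]
        have hkey : L^2 = R^2 - (K/2)^2 := by linarith [hR2]
        rw [hkey]
        field_simp
        ring
end Aux

/-- for a qubit and `q = 1/2`, the optimal expected utility equals
`(X - pY)/2 + √(((X - pY)/2)² + |c|² Z²)`, and it equals the maximum over all `(α, β)` with
`|α|² + |β|² = 1` of `|β|²(X - pY) - 2 Re(cαβ) Z`. -/
theorem stmt11 (u : ℝ → ℝ) (hu0 : u 0 = 0)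
    (ε : Fin 2 → ℝ) (hε : ε 0 < ε 1)
    (v : Fin 2 → Fin 2 → ℂ) (hv : ONFam v)
    (p : ℝ) (c : ℂ)
    (ρ : Matrix (Fin 2) (Fin 2) ℂ) (hρ : IsDensity ρ)
    (hρdef : ρ = (p : ℂ) • ketbra (v 0) (v 0) + c • ketbra (v 0) (v 1) +
      (starRingEnd ℂ c) • ketbra (v 1) (v 0) + ((1 - p : ℝ) : ℂ) • ketbra (v 1) (v 1))
    (X Y Z : ℝ) (hX : X = u (ε 1 - ε 0)) (hY : Y = u (ε 1 - ε 0) - u (-(ε 1 - ε 0)))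
    (hZ : Z = u ((ε 1 - ε 0)/2) - u (-((ε 1 - ε 0)/2))) :
    IsGreatest {x : ℝ | ∃ U ∈ Matrix.unitaryGroup (Fin 2) ℂ, x = expUtil u (1/2) ε v ρ U}
      ((X - p * Y)/2 + Real.sqrt (((X - p * Y)/2)^2 + Complex.normSq c * Z^2)) ∧
    IsGreatest {x : ℝ | ∃ α β : ℂ, Complex.normSq α + Complex.normSq β = 1 ∧
        x = Complex.normSq β * (X - p * Y) - 2 * (c * α * β).re * Z}
      ((X - p * Y)/2 + Real.sqrt (((X - p * Y)/2)^2 + Complex.normSq c * Z^2)) := by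
  subst hX hY hZ
  set K : ℝ := u (ε 1 - ε 0) - p * (u (ε 1 - ε 0) - u (-(ε 1 - ε 0))) with hKdef
  set W : ℝ := u ((ε 1 - ε 0)/2) - u (-((ε 1 - ε 0)/2)) with hWdef
  have main1 : ∀ U ∈ Matrix.unitaryGroup (Fin 2) ℂ, ∃ α β : ℂ,
      Complex.normSq α + Complex.normSq β = 1 ∧
      expUtil u (1/2) ε v ρ U = Complex.normSq β * K - 2 * (c * α * β).re * W := by
    intro U hU
    refine ⟨((Vm v)ᴴ * U * Vm v) 0 0, -(starRingEnd ℂ (((Vm v)ᴴ * U * Vm v) 0 1)), ?_, ?_⟩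
    · have h := formula_norm v hv U hU
      simpa [Complex.normSq_neg, Complex.normSq_conj] using h
    · rw [hKdef, hWdef]
      exact formula u hu0 ε v hv p c ρ hρdef U hU
  have main2 : ∀ α β : ℂ, Complex.normSq α + Complex.normSq β = 1 →
      ∃ U ∈ Matrix.unitaryGroup (Fin 2) ℂ,
        expUtil u (1/2) ε v ρ U = Complex.normSq β * K - 2 * (c * α * β).re * W := by
    intro α β hαβ
    have hUmem : Vm v * qU α β * (Vm v)ᴴ ∈ Matrix.unitaryGroup (Fin 2) ℂ := by
      rw [← Matrix.star_eq_conjTranspose]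
      exact mul_mem (mul_mem (Vm_mem hv) (qU_mem hαβ)) (Unitary.star_mem (Vm_mem hv))
    refine ⟨Vm v * qU α β * (Vm v)ᴴ, hUmem, ?_⟩
    have hf := formula u hu0 ε v hv p c ρ hρdef _ hUmem
    rw [hKdef, hWdef, hf, qU_conj v hv α β]
    simp [qU]
  refine ⟨⟨?_, ?_⟩, ⟨?_, ?_⟩⟩
  · obtain ⟨αm, βm, hm1, hm2⟩ := opt_ach K W c
    obtain ⟨U, hU, hval⟩ := main2 αm βm hm1
    exact ⟨U, hU, by rw [hval]; exact hm2.symm⟩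
  · rintro x ⟨U, hU, rfl⟩
    obtain ⟨α, β, h1, h2⟩ := main1 U hU
    rw [h2]
    exact opt_bound K W c α β h1
  · obtain ⟨αm, βm, hm1, hm2⟩ := opt_ach K W c
    exact ⟨αm, βm, hm1, hm2.symm⟩
  · rintro x ⟨α, β, h1, rfl⟩
    exact opt_bound K W c α β h1
end Daemonic
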